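/- Let X ∈ ℝ^{n×T} have singular value decomposition X = U_X Σ_X V_Xᵀ with U_X ∈ ℝ^{n×n} and V_X ∈ ℝ^{T×T} orthogonal, and let the top m singular values σ_1 ≥ … ≥ σ_m of X be positive. Let C_X = (1/T)XXᵀ, so that C_X = U_X Λ_C U_Xᵀ with Λ_C = (1/T)Σ_XΣ_Xᵀ. Let Λ_C^m = diag(σ_1²/T, …, σ_m²/T), let U_X^m ∈ ℝ^{n×m} consist of the first m columns of U_X, let Σ_X^m = diag(σ_1, …, σ_m), and let V_X^m ∈ ℝ^{T×m} consist of the first m columns of V_X. For any orthogonal U ∈ ℝ^{m×m}, set W⋆ = U Λ_C^m (U_X^m)ᵀ and let M⋆ be the unique symmetric positive definite cube root of W⋆ C_X (W⋆)ᵀ. Then (M⋆)⁻¹ W⋆ X = U Σ_X^m (V_X^m)ᵀ; that is, the projected optimal output Y⋆ = (M⋆)⁻¹W⋆X equals the projection of the input data onto the principal subspace of their covariance matrix, as in the closed-form solution of the similarity matching problem. -/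

import Mathlib

open Matrix


lemma posDef_smul' {m : ℕ} {A : Matrix (Fin m) (Fin m) ℝ} (hA : A.PosDef) {c : ℝ}
    (hc : 0 < c) : (c • A).PosDef := by
  refine Matrix.PosDef.of_dotProduct_mulVec_pos ?_ (fun x hx => ?_)
  · unfold Matrix.IsHermitian
    rw [conjTranspose_smul, hA.1.eq]
    simp
  · rw [smul_mulVec, dotProduct_smul]
    exact mul_pos hc (hA.dotProduct_mulVec_pos hx)

lemma cube_aux {m : ℕ} {B : Matrix (Fin m) (Fin m) ℝ} (hB : B.PosDef) {a : ℝ} (ha : 0 < a)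
    {v : Fin m → ℝ} (hv : B ^ 3 *ᵥ v = a ^ 3 • v) : B *ᵥ v = a • v := by
  set w := B *ᵥ v - a • v with hw
  set C := B ^ 2 + a • B + (a ^ 2) • (1 : Matrix (Fin m) (Fin m) ℝ) with hCdef
  have hC : C.PosDef := by
    have h1 : (B ^ 2).PosSemidef := hB.posSemidef.pow 2
    have h2 : (a • B).PosDef := posDef_smul' hB ha
    have h3 : ((a ^ 2) • (1 : Matrix (Fin m) (Fin m) ℝ)).PosDef :=
      posDef_smul' Matrix.PosDef.one (pow_pos ha 2)
    exact (Matrix.PosDef.posSemidef_add h1 h2).add_posSemidef h3.posSemidef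
  have hCw : C *ᵥ w = 0 := by
    have e1 : B ^ 2 *ᵥ (B *ᵥ v) = B ^ 3 *ᵥ v := by
      rw [mulVec_mulVec, ← pow_succ]
    have e2 : B *ᵥ (B *ᵥ v) = B ^ 2 *ᵥ v := by
      rw [mulVec_mulVec, ← pow_two]
    simp only [hCdef, hw, add_mulVec, mulVec_sub, mulVec_smul, smul_mulVec, one_mulVec,
      e1, e2, hv]
    module
  have hw0 : w = 0 := by
    by_contra h
    have := hC.dotProduct_mulVec_pos h
    rw [hCw, dotProduct_zero] at this
    exact lt_irrefl 0 this
  have := sub_eq_zero.mp hw0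
  exact this

lemma cube_root_unique {m : ℕ} {A B : Matrix (Fin m) (Fin m) ℝ} (hA : A.PosDef) (hB : B.PosDef)
    (h : A ^ 3 = B ^ 3) : A = B := by
  have key : ∀ j, B *ᵥ ⇑(hA.1.eigenvectorBasis j) = A *ᵥ ⇑(hA.1.eigenvectorBasis j) := by
    intro j
    set v := ⇑(hA.1.eigenvectorBasis j) with hvdef
    set a := hA.1.eigenvalues j with hadef
    have hv : A *ᵥ v = a • v := hA.1.mulVec_eigenvectorBasis j
    have hk : ∀ k : ℕ, A ^ k *ᵥ v = (a ^ k) • v := by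
      intro k; induction k with
      | zero => simp
      | succ k ih =>
        rw [pow_succ, pow_succ, ← mulVec_mulVec, hv, mulVec_smul, ih, smul_smul, mul_comm]
    rw [hv]
    exact cube_aux hB (hA.eigenvalues_pos j) (by rw [← h]; exact hk 3)
  set V : Matrix (Fin m) (Fin m) ℝ := (hA.1.eigenvectorUnitary : Matrix (Fin m) (Fin m) ℝ) with hV
  have hAV : A * V = B * V := by
    ext i j
    have h1 : (A * V) i j = (A *ᵥ ⇑(hA.1.eigenvectorBasis j)) i := by
      simp [mul_apply, mulVec, dotProduct, hV]
    have h2 : (B * V) i j = (B *ᵥ ⇑(hA.1.eigenvectorBasis j)) i := by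
      simp [mul_apply, mulVec, dotProduct, hV]
    rw [h1, h2, key j]
  have hVu : V * star V = 1 := by
    exact Matrix.mem_unitaryGroup_iff.mp (hA.1.eigenvectorUnitary).2
  calc A = A * V * star V := by rw [mul_assoc, hVu, mul_one]
    _ = B * V * star V := by rw [hAV]
    _ = B := by rw [mul_assoc, hVu, mul_one]

lemma posDef_conj_orth {m : ℕ} {A U : Matrix (Fin m) (Fin m) ℝ} (hA : A.PosDef)
    (hU : Uᵀ * U = 1) (hU2 : U * Uᵀ = 1) : (U * A * Uᵀ).PosDef := by
  have h := hA.posSemidef.mul_mul_conjTranspose_same U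
  rw [conjTranspose_eq_transpose_of_trivial] at h
  refine Matrix.PosDef.of_dotProduct_mulVec_pos h.1 fun x hx => ?_
  have hx2 : Uᵀ *ᵥ x ≠ 0 := by
    intro hc
    apply hx
    have : U *ᵥ (Uᵀ *ᵥ x) = x := by rw [mulVec_mulVec, hU2, one_mulVec]
    rw [hc, mulVec_zero] at this
    exact this.symm
  have hpos := hA.dotProduct_mulVec_pos hx2
  have key : star x ⬝ᵥ (U * A * Uᵀ) *ᵥ x = star (Uᵀ *ᵥ x) ⬝ᵥ A *ᵥ (Uᵀ *ᵥ x) := by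
    simp only [star_trivial, ← mulVec_mulVec]
    rw [dotProduct_mulVec x, ← Matrix.mulVec_transpose]
  rw [key]; exact hpos



/-- projecting the optimal `W⋆`, `M⋆` back to the output space
yields `Y⋆ = (M⋆)⁻¹ W⋆ X = U Σ_X^m (V_X^m)ᵀ`, the projection of the input data
onto the principal subspace of their covariance matrix. -/
theorem optimal_projection
    {n T m : ℕ} (hT : 1 ≤ T) (hmn : m ≤ n) (hmT : m ≤ T)
    (X : Matrix (Fin n) (Fin T) ℝ)
    (UX : Matrix (Fin n) (Fin n) ℝ) (VX : Matrix (Fin T) (Fin T) ℝ)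
    (hUX : UXᵀ * UX = 1) (hUX' : UX * UXᵀ = 1)
    (hVX : VXᵀ * VX = 1) (hVX' : VX * VXᵀ = 1)
    (s : ℕ → ℝ) (SigX : Matrix (Fin n) (Fin T) ℝ)
    (hSigX : ∀ i j, SigX i j = if (i : ℕ) = (j : ℕ) then s i else 0)
    (hdesc : ∀ i j : ℕ, i ≤ j → j < min n T → s j ≤ s i)
    (hnonneg : ∀ i : ℕ, i < min n T → 0 ≤ s i)
    (hpos : ∀ i : ℕ, i < m → 0 < s i)
    (hX : X = UX * SigX * VXᵀ)
    (U : Matrix (Fin m) (Fin m) ℝ) (hU : Uᵀ * U = 1) (hU' : U * Uᵀ = 1)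
    (Wstar : Matrix (Fin m) (Fin n) ℝ)
    (hWstar : Wstar = U * Matrix.diagonal (fun i : Fin m => (s i.1) ^ 2 / (T : ℝ)) *
        (UX.submatrix id (Fin.castLE hmn))ᵀ)
    (Mstar : Matrix (Fin m) (Fin m) ℝ) (hMpd : Mstar.PosDef)
    (hM3 : Mstar ^ 3 = Wstar * ((T : ℝ)⁻¹ • (X * Xᵀ)) * Wstarᵀ) :
    Mstar⁻¹ * Wstar * X =
      U * Matrix.diagonal (fun i : Fin m => s i.1) * (VX.submatrix id (Fin.castLE hmT))ᵀ := by
  have hT0 : (0:ℝ) < (T:ℝ) := by exact_mod_cast hT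
  set P : Matrix (Fin n) (Fin m) ℝ := UX.submatrix id (Fin.castLE hmn) with hP
  set Q : Matrix (Fin T) (Fin m) ℝ := VX.submatrix id (Fin.castLE hmT) with hQ
  set D : Matrix (Fin m) (Fin m) ℝ := Matrix.diagonal (fun i : Fin m => s i.1) with hD
  set D2T : Matrix (Fin m) (Fin m) ℝ :=
    Matrix.diagonal (fun i : Fin m => (s i.1) ^ 2 / (T : ℝ)) with hD2T
  set F : Matrix (Fin m) (Fin T) ℝ :=
    (1 : Matrix (Fin T) (Fin T) ℝ).submatrix (Fin.castLE hmT) id with hF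
  -- basic identities
  have entry : ∀ (i : Fin m) (t : Fin T),
      (D * F) i t = if (i : ℕ) = (t : ℕ) then s i.1 else 0 := by
    intro i t
    rw [hD, hF, diagonal_mul]
    simp only [submatrix_apply, id_eq, one_apply]
    by_cases h : (i : ℕ) = (t : ℕ)
    · rw [if_pos h, if_pos (by simp [Fin.ext_iff, h]), mul_one]
    · rw [if_neg h, if_neg (by simp [Fin.ext_iff, h]), mul_zero]
  have lem1 : Pᵀ * UX * SigX = D * F := by
    have e1 : Pᵀ * UX = (UXᵀ * UX).submatrix (Fin.castLE hmn) id := by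
      ext i j; simp [mul_apply, hP]
    rw [e1, hUX]
    ext i t
    rw [entry i t, mul_apply, Finset.sum_eq_single (Fin.castLE hmn i)]
    · simp [hSigX, one_apply]
    · intro b _ hb
      simp [one_apply, (by simpa [eq_comm] using hb : ¬ Fin.castLE hmn i = b)]
    · simp
  have lem2 : F * VXᵀ = Qᵀ := by
    ext i t
    rw [mul_apply, Finset.sum_eq_single (Fin.castLE hmT i)]
    · simp [hF, hQ, one_apply]
    · intro b _ hb
      simp [hF, one_apply, (by simpa [eq_comm] using hb : ¬ Fin.castLE hmT i = b)]
    · simp [hF]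
  have lem3 : F * Fᵀ = 1 := by
    ext i j
    rw [mul_apply, Finset.sum_eq_single (Fin.castLE hmT i)]
    · by_cases h : i = j
      · simp [hF, one_apply, h]
      · have h' : ¬ j = i := fun hc => h hc.symm
        simp [hF, one_apply, h, h', (by simp [Fin.ext_iff]; exact fun hc => h (Fin.ext hc) :
          ¬ Fin.castLE hmT i = Fin.castLE hmT j), fun hc => h (Fin.ext hc)]
    · intro b _ hb
      simp [hF, one_apply, (by simpa [eq_comm] using hb : ¬ Fin.castLE hmT i = b)]
    · simp [hF]
  have lem4 : Qᵀ * Q = 1 := by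
    have e1 : Qᵀ * Q = (VXᵀ * VX).submatrix (Fin.castLE hmT) (Fin.castLE hmT) := by
      ext i j; simp [mul_apply, hQ]
    rw [e1, hVX]
    ext i j
    by_cases h : i = j
    · simp [h, one_apply]
    · simp [one_apply, h, (by simp [Fin.ext_iff]; exact fun hc => h (Fin.ext hc) :
        ¬ Fin.castLE hmT i = Fin.castLE hmT j)]
  -- step A : Wstar * X
  have hWX : Wstar * X = U * (D2T * D) * Qᵀ := by
    have h1 : Wstar * X = U * D2T * (Pᵀ * UX * SigX) * VXᵀ := by
      rw [hWstar, hX]; simp only [Matrix.mul_assoc]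
    rw [h1, lem1, show U * D2T * (D * F) * VXᵀ = U * (D2T * D) * (F * VXᵀ) by
      simp only [Matrix.mul_assoc], lem2]
  -- step B : the cube of Mstar
  set G : Matrix (Fin m) (Fin m) ℝ := D2T * D with hG
  have hGd : G = Matrix.diagonal (fun i : Fin m => s i.1 ^ 2 / (T : ℝ) * s i.1) := by
    rw [hG, hD2T, hD, diagonal_mul_diagonal]
  have hGsym : Gᵀ = G := by rw [hGd, diagonal_transpose]
  have assoc3 : ∀ (A B : Matrix (Fin m) (Fin m) ℝ),
      (U * A * Uᵀ) * (U * B * Uᵀ) = U * (A * B) * Uᵀ := by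
    intro A B
    calc (U * A * Uᵀ) * (U * B * Uᵀ) = U * (A * ((Uᵀ * U) * (B * Uᵀ))) := by
          simp only [Matrix.mul_assoc]
      _ = U * (A * B) * Uᵀ := by rw [hU, one_mul]; simp only [Matrix.mul_assoc]
  set E : Matrix (Fin m) (Fin m) ℝ :=
    Matrix.diagonal (fun i : Fin m => (T : ℝ)⁻¹ * (s i.1) ^ 2) with hE
  set N : Matrix (Fin m) (Fin m) ℝ := U * E * Uᵀ with hN
  have hEpd : E.PosDef := by
    rw [hE]
    exact Matrix.posDef_diagonal_iff.mpr fun i =>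
      mul_pos (inv_pos.mpr hT0) (pow_pos (hpos i.1 i.2) 2)
  have hNpd : N.PosDef := posDef_conj_orth hEpd hU hU'
  have hE3 : E ^ 3 = (T : ℝ)⁻¹ • (G * G) := by
    rw [show E ^ 3 = E * E * E by rw [pow_succ, pow_succ, pow_one]]
    rw [hE, hGd, diagonal_mul_diagonal, diagonal_mul_diagonal, diagonal_mul_diagonal,
      ← diagonal_smul]
    apply congrArg Matrix.diagonal
    funext i
    have hs := (hpos i.1 i.2).ne'
    have hT' : (T : ℝ) ≠ 0 := hT0.ne'
    simp only [Pi.smul_apply, smul_eq_mul]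
    field_simp
  have hN3 : N ^ 3 = Mstar ^ 3 := by
    have t0 : N ^ 3 = U * E ^ 3 * Uᵀ := by
      rw [show N ^ 3 = N * N * N by rw [pow_succ, pow_succ, pow_one], hN, assoc3 E E, assoc3 (E * E) E,
        show E * E * E = E ^ 3 by rw [pow_succ, pow_succ, pow_one]]
    have t1 : (Wstar * X)ᵀ = Q * (G * Uᵀ) := by
      rw [hWX, transpose_mul, transpose_mul, transpose_transpose, hGsym, Matrix.mul_assoc]
    have t2 : Mstar ^ 3 = (T : ℝ)⁻¹ • (U * (G * G) * Uᵀ) := by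
      rw [hM3, Matrix.mul_smul, Matrix.smul_mul]
      congr 1
      calc Wstar * (X * Xᵀ) * Wstarᵀ = (Wstar * X) * (Wstar * X)ᵀ := by
            rw [transpose_mul]; simp only [Matrix.mul_assoc]
        _ = U * G * Qᵀ * (Q * (G * Uᵀ)) := by rw [t1, hWX]
        _ = U * (G * ((Qᵀ * Q) * (G * Uᵀ))) := by simp only [Matrix.mul_assoc]
        _ = U * (G * G) * Uᵀ := by rw [lem4, one_mul]; simp only [Matrix.mul_assoc]
    rw [t0, hE3, t2, Matrix.mul_smul, Matrix.smul_mul]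
  have hMN : Mstar = N := cube_root_unique hMpd hNpd hN3.symm
  -- step C : invert Mstar
  have hNe : ∀ i : Fin m, ((T : ℝ)⁻¹ * (s i.1) ^ 2) ≠ 0 := fun i =>
    (mul_pos (inv_pos.mpr hT0) (pow_pos (hpos i.1 i.2) 2)).ne'
  set Ei : Matrix (Fin m) (Fin m) ℝ :=
    Matrix.diagonal (fun i : Fin m => ((T : ℝ)⁻¹ * (s i.1) ^ 2)⁻¹) with hEi
  have hMinv : Mstar⁻¹ = U * Ei * Uᵀ := by
    apply Matrix.inv_eq_right_inv
    rw [hMN, hN, assoc3 E Ei, hE, hEi, diagonal_mul_diagonal]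
    rw [show (fun i : Fin m => ((T : ℝ)⁻¹ * (s i.1) ^ 2) * ((T : ℝ)⁻¹ * (s i.1) ^ 2)⁻¹)
        = fun _ : Fin m => (1 : ℝ) by funext i; exact mul_inv_cancel₀ (hNe i)]
    rw [diagonal_one, mul_one, hU']
  -- final computation
  rw [Matrix.mul_assoc, hWX, hMinv]
  calc U * Ei * Uᵀ * (U * G * Qᵀ) = U * (Ei * ((Uᵀ * U) * (G * Qᵀ))) := by
        simp only [Matrix.mul_assoc]
    _ = U * (Ei * G) * Qᵀ := by rw [hU, Matrix.one_mul]; simp only [Matrix.mul_assoc]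
    _ = U * D * Qᵀ := by
        rw [hEi, hGd, diagonal_mul_diagonal, hD]
        rw [show (fun i : Fin m => ((T : ℝ)⁻¹ * (s i.1) ^ 2)⁻¹ * (s i.1 ^ 2 / (T : ℝ) * s i.1))
            = fun i : Fin m => s i.1 by
          funext i
          have hs := (hpos i.1 i.2).ne'
          have hT' : (T : ℝ) ≠ 0 := hT0.ne'
          field_simp]
    _ = U * Matrix.diagonal (fun i : Fin m => s i.1) * (VX.submatrix id (Fin.castLE hmT))ᵀ := by
        rw [hD, hQ]
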